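/- Let ρ be a positive definite density matrix on a bipartite space ℂᵐ ⊗ ℂⁿ (Tr ρ = 1) whose partial transpose ρ^Γ is not positive semidefinite. Then the Rains bound of ρ is strictly smaller than its logarithmic negativity: inf{ S(ρ‖τ) : τ positive definite, ‖τ^Γ‖₁ ≤ 1 } < log ‖ρ^Γ‖₁. -/

import Mathlib

open Matrix
open scoped ComplexOrder

noncomputable def traceNorm {ι : Type*} [Fintype ι] [DecidableEq ι]
    (A : Matrix ι ι ℂ) : ℝ :=
  (((Matrix.posSemidef_conjTranspose_mul_self A).1.eigenvectorUnitary : Matrix ι ι ℂ) *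
    Matrix.diagonal (((↑) : ℝ → ℂ) ∘ (Real.sqrt ∘ (Matrix.posSemidef_conjTranspose_mul_self A).1.eigenvalues)) *
    (star (Matrix.posSemidef_conjTranspose_mul_self A).1.eigenvectorUnitary : Matrix ι ι ℂ)).trace.re

noncomputable def mfun {ι : Type*} [Fintype ι] [DecidableEq ι] (g : ℝ → ℝ)
    (A : Matrix ι ι ℂ) : Matrix ι ι ℂ :=
  if hA : A.IsHermitian then
    (hA.eigenvectorUnitary : Matrix ι ι ℂ) *
      Matrix.diagonal (fun i => (g (hA.eigenvalues i) : ℂ)) *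
      (star hA.eigenvectorUnitary : Matrix ι ι ℂ)
  else 0

noncomputable def divDiff {ι : Type*} (g : ℝ → ℝ) (a : ι → ℝ) : Matrix ι ι ℝ :=
  Matrix.of fun i j =>
    if a i = a j then deriv g (a i) else (g (a i) - g (a j)) / (a i - a j)

noncomputable def Dop {ι : Type*} [Fintype ι] [DecidableEq ι] (g : ℝ → ℝ)
    {A : Matrix ι ι ℂ} (hA : A.IsHermitian) (B : Matrix ι ι ℂ) : Matrix ι ι ℂ :=
  (hA.eigenvectorUnitary : Matrix ι ι ℂ) *
    (((divDiff g hA.eigenvalues).map Complex.ofReal) ⊙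
      ((star hA.eigenvectorUnitary : Matrix ι ι ℂ) * B *
        (hA.eigenvectorUnitary : Matrix ι ι ℂ))) *
    (star hA.eigenvectorUnitary : Matrix ι ι ℂ)

noncomputable def relEnt {ι : Type*} [Fintype ι] [DecidableEq ι]
    (ρ σ : Matrix ι ι ℂ) : ℝ :=
  ((ρ * (mfun Real.log ρ - mfun Real.log σ)).trace).re

def ptrans {m n : Type*} (A : Matrix (m × n) (m × n) ℂ) : Matrix (m × n) (m × n) ℂ :=
  Matrix.of fun p q => A (p.1, q.2) (q.1, p.2)


section RainsAux

open Polynomial Filter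

variable {ι : Type*} [Fintype ι] [DecidableEq ι]

/-- Unitary conjugation of a real diagonal matrix. -/
noncomputable def uconj (U : Matrix ι ι ℂ) (d : ι → ℝ) : Matrix ι ι ℂ :=
  U * Matrix.diagonal (fun i => (d i : ℂ)) * star U

lemma uconj_isHermitian (U : Matrix ι ι ℂ) (d : ι → ℝ) : (uconj U d).IsHermitian := by
  unfold uconj
  rw [Matrix.IsHermitian, star_eq_conjTranspose, conjTranspose_mul, conjTranspose_mul,
    ← star_eq_conjTranspose U, ← star_eq_conjTranspose (star U), star_star, diagonal_conjTranspose]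
  rw [mul_assoc]
  congr 1
  ext i j
  simp [Pi.star_def]

lemma uconj_mul {U : Matrix ι ι ℂ} (h2 : star U * U = 1) (d e : ι → ℝ) :
    uconj U d * uconj U e = uconj U (fun i => d i * e i) := by
  unfold uconj
  have : U * diagonal (fun i => (d i : ℂ)) * star U * (U * diagonal (fun i => (e i : ℂ)) * star U)
      = U * (diagonal (fun i => (d i : ℂ)) * (star U * U) * diagonal (fun i => (e i : ℂ)))
        * star U := by
    simp only [mul_assoc]
  rw [this, h2, mul_one, diagonal_mul_diagonal]
  push_cast
  rfl

lemma uconj_sub (U : Matrix ι ι ℂ) (d e : ι → ℝ) :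
    uconj U d - uconj U e = uconj U (fun i => d i - e i) := by
  unfold uconj
  rw [← sub_mul, ← mul_sub, diagonal_sub]
  push_cast
  rfl

lemma trace_uconj {U : Matrix ι ι ℂ} (h2 : star U * U = 1) (d : ι → ℝ) :
    (uconj U d).trace = ∑ i, (d i : ℂ) := by
  unfold uconj
  rw [trace_mul_cycle, h2, one_mul, trace_diagonal]

/-- Conjugation by a unitary as an algebra homomorphism. -/
noncomputable def conjAH (U : Matrix ι ι ℂ) (h1 : U * star U = 1) (h2 : star U * U = 1) :
    Matrix ι ι ℂ →ₐ[ℂ] Matrix ι ι ℂ where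
  toFun X := U * X * star U
  map_one' := by show U * 1 * star U = 1; rw [mul_one, h1]
  map_mul' X Y := by
    show U * (X * Y) * star U = U * X * star U * (U * Y * star U)
    have : U * X * star U * (U * Y * star U) = U * (X * (star U * U) * Y) * star U := by
      simp only [mul_assoc]
    rw [this, h2, mul_one]
  map_zero' := by show U * 0 * star U = 0; simp
  map_add' X Y := by
    show U * (X + Y) * star U = U * X * star U + U * Y * star U
    rw [mul_add, add_mul]
  commutes' r := by
    show U * algebraMap ℂ (Matrix ι ι ℂ) r * star U = algebraMap ℂ (Matrix ι ι ℂ) r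
    rw [Algebra.algebraMap_eq_smul_one, Matrix.mul_smul, mul_one, Matrix.smul_mul, h1]

lemma aeval_uconj {U : Matrix ι ι ℂ} (h1 : U * star U = 1) (h2 : star U * U = 1)
    (d : ι → ℝ) (p : ℝ[X]) :
    Polynomial.aeval (uconj U d) (p.map (algebraMap ℝ ℂ)) =
      uconj U (fun i => p.eval (d i)) := by
  have hd : uconj U d = conjAH U h1 h2 (diagonal (fun i => (d i : ℂ))) := rfl
  have hdiag : (diagonal (fun i => (d i : ℂ)) : Matrix ι ι ℂ)
      = diagonalAlgHom ℂ (fun i => (d i : ℂ)) := rfl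
  rw [hd, Polynomial.aeval_algHom_apply, hdiag, Polynomial.aeval_algHom_apply]
  have hpi : Polynomial.aeval (fun i => (d i : ℂ)) (p.map (algebraMap ℝ ℂ))
      = fun i => ((p.eval (d i) : ℝ) : ℂ) := by
    funext i
    have hev := Polynomial.aeval_algHom_apply (Pi.evalAlgHom ℂ (fun _ : ι => ℂ) i)
      (fun i => (d i : ℂ)) (p.map (algebraMap ℝ ℂ))
    have this1 : (Pi.evalAlgHom ℂ (fun _ : ι => ℂ) i) (fun i => (d i : ℂ)) = ((d i : ℂ)) := rfl
    rw [this1] at hev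
    have key : Polynomial.aeval ((d i : ℂ)) (p.map (algebraMap ℝ ℂ))
        = ((p.eval (d i) : ℝ) : ℂ) := by
      rw [Polynomial.aeval_def, Polynomial.eval₂_eq_eval_map, Polynomial.map_map]
      have hcomp : (algebraMap ℂ ℂ).comp (algebraMap ℝ ℂ) = algebraMap ℝ ℂ := by
        ext x; simp
      rw [hcomp, Polynomial.eval_map]
      have hdd : ((d i : ℂ)) = algebraMap ℝ ℂ (d i) := rfl
      rw [hdd, Polynomial.eval₂_at_apply]
      rfl
    exact hev.symm.trans key
  rw [hpi]
  rfl

lemma spectral_uconj {A : Matrix ι ι ℂ} (hA : A.IsHermitian) :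
    A = uconj (hA.eigenvectorUnitary : Matrix ι ι ℂ) hA.eigenvalues := by
  conv_lhs => rw [hA.spectral_theorem]
  rfl

lemma evU_h1 {A : Matrix ι ι ℂ} (hA : A.IsHermitian) :
    (hA.eigenvectorUnitary : Matrix ι ι ℂ) * star (hA.eigenvectorUnitary : Matrix ι ι ℂ) = 1 :=
  mem_unitaryGroup_iff.mp (SetLike.coe_mem _)

lemma evU_h2 {A : Matrix ι ι ℂ} (hA : A.IsHermitian) :
    star (hA.eigenvectorUnitary : Matrix ι ι ℂ) * (hA.eigenvectorUnitary : Matrix ι ι ℂ) = 1 :=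
  mem_unitaryGroup_iff'.mp (SetLike.coe_mem _)

lemma mfun_uconj {U : Matrix ι ι ℂ} (h1 : U * star U = 1) (h2 : star U * U = 1)
    (d : ι → ℝ) (g : ℝ → ℝ) :
    mfun g (uconj U d) = uconj U (fun i => g (d i)) := by
  classical
  have hA : (uconj U d).IsHermitian := uconj_isHermitian U d
  rw [mfun, dif_pos hA]
  set V : Matrix ι ι ℂ := (hA.eigenvectorUnitary : Matrix ι ι ℂ) with hV
  set e : ι → ℝ := hA.eigenvalues with he
  have hV1 : V * star V = 1 := evU_h1 hA
  have hV2 : star V * V = 1 := evU_h2 hA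
  have hspec : uconj U d = uconj V e := spectral_uconj hA
  set s : Finset ℝ := Finset.image d Finset.univ ∪ Finset.image e Finset.univ with hs
  have hinj : Set.InjOn id (s : Set ℝ) := Function.injective_id.injOn
  set p : ℝ[X] := Lagrange.interpolate s id g with hp
  have hpe : ∀ x ∈ s, p.eval x = g x := by
    intro x hx
    have := Lagrange.eval_interpolate_at_node (r := g) (v := id) hinj hx
    exact this
  have hgd : (fun i => g (d i)) = fun i => p.eval (d i) := by
    funext i
    exact (hpe _ (Finset.mem_union_left _ (Finset.mem_image_of_mem d (Finset.mem_univ i)))).symm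
  have hge : (fun i => g (e i)) = fun i => p.eval (e i) := by
    funext i
    exact (hpe _ (Finset.mem_union_right _ (Finset.mem_image_of_mem e (Finset.mem_univ i)))).symm
  show uconj V (fun i => g (e i)) = uconj U (fun i => g (d i))
  rw [hgd, hge, ← aeval_uconj hV1 hV2 e p, ← aeval_uconj h1 h2 d p, ← hspec]

lemma posSemidef_uconj {U : Matrix ι ι ℂ} (d : ι → ℝ) (hd : ∀ i, 0 ≤ d i) :
    (uconj U d).PosSemidef := by
  have hdiag : (Matrix.diagonal (fun i => (d i : ℂ))).PosSemidef := by
    refine Matrix.PosSemidef.diagonal fun i => ?_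
    show (0:ℂ) ≤ ((d i : ℝ) : ℂ)
    exact_mod_cast hd i
  simpa [uconj, Matrix.star_eq_conjTranspose] using hdiag.mul_mul_conjTranspose_same U

lemma posDef_uconj {U : Matrix ι ι ℂ} (h1 : U * star U = 1) (d : ι → ℝ)
    (hd : ∀ i, 0 < d i) : (uconj U d).PosDef := by
  refine Matrix.PosDef.of_dotProduct_mulVec_pos (uconj_isHermitian U d) (fun x hx => ?_)
  have hdiag : (Matrix.diagonal (fun i => (d i : ℂ))).PosDef := by
    refine Matrix.PosDef.diagonal fun i => ?_
    show (0:ℂ) < ((d i : ℝ) : ℂ)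
    exact_mod_cast hd i
  have hy : (star U) *ᵥ x ≠ 0 := by
    intro h
    apply hx
    have := congrArg (fun v => U *ᵥ v) h
    simpa [Matrix.mulVec_mulVec, h1] using this
  have key : star x ⬝ᵥ (uconj U d) *ᵥ x
      = star ((star U) *ᵥ x) ⬝ᵥ (Matrix.diagonal (fun i => (d i : ℂ))) *ᵥ ((star U) *ᵥ x) := by
    simp only [uconj, Matrix.star_mulVec, Matrix.star_eq_conjTranspose,
      Matrix.conjTranspose_conjTranspose, ← Matrix.mulVec_mulVec, Matrix.dotProduct_mulVec]
  rw [key]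
  exact hdiag.dotProduct_mulVec_pos hy

lemma traceNorm_uconj {U : Matrix ι ι ℂ} (h1 : U * star U = 1) (h2 : star U * U = 1)
    (d : ι → ℝ) : traceNorm (uconj U d) = ∑ i, |d i| := by
  set A := uconj U d with hA
  set B := uconj U (fun i => |d i|) with hB
  have hBpsd : B.PosSemidef := posSemidef_uconj _ (fun i => abs_nonneg _)
  have hsq : B ^ 2 = Aᴴ * A := by
    rw [pow_two, show Aᴴ = A from uconj_isHermitian U d, hB, hA, uconj_mul h2, uconj_mul h2]
    have : (fun i => |d i| * |d i|) = fun i => d i * d i := by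
      funext i; exact abs_mul_abs_self (d i)
    rw [this]
  have key : traceNorm A = (mfun Real.sqrt (Aᴴ * A)).trace.re := by
    rw [traceNorm, mfun, dif_pos (Matrix.posSemidef_conjTranspose_mul_self A).1]
    rfl
  have hAA : Aᴴ * A = uconj U (fun i => d i * d i) := by
    rw [show Aᴴ = A from uconj_isHermitian U d, hA, uconj_mul h2]
  rw [key, hAA, mfun_uconj h1 h2, trace_uconj h2, Complex.re_sum]
  simp [Real.sqrt_mul_self_eq_abs]

lemma uconj_affine {U : Matrix ι ι ℂ} (h1 : U * star U = 1) (c : ι → ℝ) (ε s : ℝ) :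
    uconj U (fun i => (c i + ε) * s) = (s:ℂ) • (uconj U c + (ε:ℂ) • (1 : Matrix ι ι ℂ)) := by
  unfold uconj
  have hdiag : (diagonal (fun i => (((c i + ε) * s : ℝ) : ℂ)) : Matrix ι ι ℂ)
      = (s:ℂ) • (diagonal (fun i => (c i : ℂ)) + (ε:ℂ) • (1 : Matrix ι ι ℂ)) := by
    ext i j
    by_cases h : i = j
    · subst h
      simp only [diagonal_apply_eq, Matrix.smul_apply, Matrix.add_apply, Matrix.one_apply_eq,
        smul_eq_mul]
      push_cast
      ring
    · simp [Matrix.diagonal_apply_ne _ h, Matrix.one_apply_ne h]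
  rw [hdiag, Matrix.mul_smul, Matrix.smul_mul]
  congr 1
  rw [mul_add, add_mul, Matrix.mul_smul, Matrix.smul_mul, mul_one, h1]

lemma ptrans_isHermitian {m n : Type*} {A : Matrix (m × n) (m × n) ℂ} (hA : A.IsHermitian) :
    (ptrans A).IsHermitian := by
  rw [Matrix.IsHermitian]
  ext p q
  simp only [conjTranspose_apply, ptrans, Matrix.of_apply]
  exact hA.apply _ _

lemma ptrans_trace {m n : Type*} [Fintype m] [Fintype n] (A : Matrix (m × n) (m × n) ℂ) :
    (ptrans A).trace = A.trace := rfl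

lemma ptrans_one {m n : Type*} [DecidableEq m] [DecidableEq n] :
    ptrans (1 : Matrix (m × n) (m × n) ℂ) = 1 := by
  ext p q
  simp only [ptrans, Matrix.of_apply, Matrix.one_apply, Prod.mk.injEq, Prod.ext_iff]
  by_cases h1 : p.1 = q.1 <;> by_cases h2 : p.2 = q.2 <;>
    simp [h1, h2, eq_comm]

lemma ptrans_add {m n : Type*} (A B : Matrix (m × n) (m × n) ℂ) :
    ptrans (A + B) = ptrans A + ptrans B := rfl

lemma ptrans_smul {m n : Type*} (c : ℂ) (A : Matrix (m × n) (m × n) ℂ) :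
    ptrans (c • A) = c • ptrans A := rfl

lemma psd_diag_re_nonneg {A : Matrix ι ι ℂ} (hA : A.PosSemidef) (j : ι) :
    0 ≤ (A j j).re := by
  have h := hA.dotProduct_mulVec_nonneg (Pi.single j 1)
  have hval : star (Pi.single j (1:ℂ)) ⬝ᵥ A *ᵥ Pi.single j 1 = A j j := by
    simp [dotProduct, Matrix.mulVec, Pi.single_apply, Pi.star_apply, mul_ite,
      Finset.sum_ite_eq, Finset.sum_ite_eq']
  rw [hval] at h
  exact (Complex.le_def.mp h).1

lemma exists_good_eps (lam : ι → ℝ) (hlam : ∀ i, 0 < lam i) (t : ℝ) (ht : 1 < t)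
    [Nonempty ι] :
    ∃ ε > 0, (∑ i, lam i * (Real.log (lam i) - Real.log (lam i + ε)))
      + Real.log (t + ε * (Fintype.card ι : ℝ)) < Real.log t := by
  set N : ℝ := (Fintype.card ι : ℝ) with hN
  have hN0 : 0 < N := by
    simp only [hN]
    exact_mod_cast Fintype.card_pos
  have ht0 : 0 < t := lt_trans one_pos ht
  set F : ℝ → ℝ := fun ε => (∑ i, lam i * (Real.log (lam i) - Real.log (lam i + ε)))
      + Real.log (t + ε * N) with hF
  have hF0 : F 0 = Real.log t := by
    simp [hF]
  have hsum : HasDerivAt (fun ε => ∑ i, lam i * (Real.log (lam i) - Real.log (lam i + ε)))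
      (∑ i, lam i * -((lam i + 0)⁻¹ * 1)) 0 := by
    apply HasDerivAt.fun_sum
    intro i _
    have h1 : HasDerivAt (fun ε : ℝ => lam i + ε) 1 0 := by
      simpa using (hasDerivAt_id (0:ℝ)).const_add (lam i)
    have h2 : HasDerivAt (fun ε : ℝ => Real.log (lam i + ε)) ((lam i + 0)⁻¹ * 1) 0 := by
      exact (Real.hasDerivAt_log (by simpa using (hlam i).ne')).comp 0 h1
    exact (h2.const_sub (Real.log (lam i))).const_mul (lam i)
  have hg : HasDerivAt (fun ε : ℝ => t + ε * N) (1 * N) 0 := by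
    simpa using ((hasDerivAt_id (0:ℝ)).mul_const N).const_add t
  have hlogg : HasDerivAt (fun ε : ℝ => Real.log (t + ε * N)) ((t + 0 * N)⁻¹ * (1 * N)) 0 := by
    refine (Real.hasDerivAt_log ?_).comp 0 hg
    simpa using ht0.ne'
  have htot : HasDerivAt F
      ((∑ i, lam i * -((lam i + 0)⁻¹ * 1)) + ((t + 0 * N)⁻¹ * (1 * N))) 0 :=
    hsum.add hlogg
  have hc : (∑ i, lam i * -((lam i + 0)⁻¹ * 1)) + ((t + 0 * N)⁻¹ * (1 * N)) < 0 := by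
    have h1 : ∀ i, lam i * -((lam i + 0)⁻¹ * 1) = -1 := by
      intro i
      rw [add_zero, mul_one, mul_neg, mul_inv_cancel₀ (hlam i).ne']
    rw [Finset.sum_congr rfl (fun i _ => h1 i)]
    simp only [Finset.sum_const, Finset.card_univ, nsmul_eq_mul, mul_neg_one, zero_mul,
      add_zero, mul_one, one_mul]
    have htinv : t⁻¹ < 1 := inv_lt_one_of_one_lt₀ ht
    have : t⁻¹ * N < 1 * N := by
      exact mul_lt_mul_of_pos_right htinv hN0
    simp only [hN] at *
    nlinarith
  have hslope := hasDerivAt_iff_tendsto_slope.mp htot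
  have hev : ∀ᶠ x in nhdsWithin (0:ℝ) {(0:ℝ)}ᶜ, slope F 0 x < 0 :=
    hslope.eventually_lt_const hc
  have hsub : Set.Ioi (0:ℝ) ⊆ {(0:ℝ)}ᶜ := fun x hx => by
    simp only [Set.mem_compl_iff, Set.mem_singleton_iff]
    exact ne_of_gt hx
  have hev' : ∀ᶠ x in nhdsWithin (0:ℝ) (Set.Ioi 0), slope F 0 x < 0 :=
    hev.filter_mono (nhdsWithin_mono 0 hsub)
  obtain ⟨ε, hslope_neg, hεpos⟩ := (hev'.and self_mem_nhdsWithin).exists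
  refine ⟨ε, hεpos, ?_⟩
  rw [slope_def_field, sub_zero, div_neg_iff] at hslope_neg
  have hFε : F ε < F 0 := by
    rcases hslope_neg with ⟨h1, h2⟩ | ⟨h1, h2⟩
    · exact absurd hεpos (not_lt.mpr (le_of_lt h2))
    · linarith
  rw [hF0] at hFε
  exact hFε

end RainsAux

theorem rains_bound_lt_logNegativity_of_posDef
    {m n : ℕ} (ρ : Matrix (Fin m × Fin n) (Fin m × Fin n) ℂ)
    (hρ : ρ.PosDef) (hρtr : ρ.trace = 1) (hρΓ : ¬ (ptrans ρ).PosSemidef) :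
    sInf {r : ℝ | ∃ τ : Matrix (Fin m × Fin n) (Fin m × Fin n) ℂ,
        τ.PosDef ∧ traceNorm (ptrans τ) ≤ 1 ∧ r = relEnt ρ τ} <
      Real.log (traceNorm (ptrans ρ)) := by
  classical
  have hne : Nonempty (Fin m × Fin n) := by
    by_contra h
    rw [not_nonempty_iff] at h
    have : ρ.trace = 0 := by
      simp [Matrix.trace]
    rw [hρtr] at this
    exact one_ne_zero this
  -- spectral data for ρ
  have hρH : ρ.IsHermitian := hρ.1
  set U : Matrix (Fin m × Fin n) (Fin m × Fin n) ℂ := (hρH.eigenvectorUnitary : Matrix (Fin m × Fin n) (Fin m × Fin n) ℂ)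
    with hU
  set lam : (Fin m × Fin n) → ℝ := hρH.eigenvalues with hlam
  have hU1 : U * star U = 1 := evU_h1 hρH
  have hU2 : star U * U = 1 := evU_h2 hρH
  have hρspec : ρ = uconj U lam := spectral_uconj hρH
  have hlam_pos : ∀ i, 0 < lam i := hρ.eigenvalues_pos
  have hlam_sum : ∑ i, lam i = 1 := by
    have h := trace_uconj hU2 lam
    rw [← hρspec, hρtr] at h
    have : ((∑ i, lam i : ℝ) : ℂ) = ((1:ℝ):ℂ) := by
      rw [Complex.ofReal_sum]
      push_cast
      exact h.symm
    exact_mod_cast this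
  -- spectral data for ptrans ρ
  have hΓH : (ptrans ρ).IsHermitian := ptrans_isHermitian hρH
  set V : Matrix (Fin m × Fin n) (Fin m × Fin n) ℂ := (hΓH.eigenvectorUnitary : Matrix (Fin m × Fin n) (Fin m × Fin n) ℂ)
    with hV
  set mu : (Fin m × Fin n) → ℝ := hΓH.eigenvalues with hmu
  have hV1 : V * star V = 1 := evU_h1 hΓH
  have hV2 : star V * V = 1 := evU_h2 hΓH
  have hΓspec : ptrans ρ = uconj V mu := spectral_uconj hΓH
  set t : ℝ := traceNorm (ptrans ρ) with ht_def
  have ht_eq : t = ∑ j, |mu j| := by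
    rw [ht_def, hΓspec, traceNorm_uconj hV1 hV2]
  have hmu_sum : ∑ j, mu j = 1 := by
    have h := trace_uconj hV2 mu
    rw [← hΓspec, ptrans_trace, hρtr] at h
    have : ((∑ j, mu j : ℝ) : ℂ) = ((1:ℝ):ℂ) := by
      rw [Complex.ofReal_sum]
      push_cast
      exact h.symm
    exact_mod_cast this
  have hneg : ∃ j, mu j < 0 := by
    by_contra h
    push_neg at h
    exact hρΓ (hΓspec ▸ posSemidef_uconj mu h)
  have ht1 : (1:ℝ) < t := by
    obtain ⟨j, hj⟩ := hneg
    rw [ht_eq, ← hmu_sum]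
    refine Finset.sum_lt_sum (fun i _ => le_abs_self _) ⟨j, Finset.mem_univ j, ?_⟩
    calc mu j < 0 := hj
    _ ≤ |mu j| := abs_nonneg _
  have ht0 : (0:ℝ) < t := lt_trans one_pos ht1
  -- choose ε
  obtain ⟨ε, hεpos, hFε⟩ := exists_good_eps lam hlam_pos t ht1
  set N : ℝ := (Fintype.card (Fin m × Fin n) : ℝ) with hNdef
  have hN0 : 0 < N := by
    rw [hNdef]; exact_mod_cast Fintype.card_pos
  set nb : ℝ := t + ε * N with hnb
  have hnb0 : 0 < nb := by positivity
  set b : (Fin m × Fin n) → ℝ := fun i => (lam i + ε) * nb⁻¹ with hb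
  have hbpos : ∀ i, 0 < b i := fun i => by
    have := hlam_pos i
    positivity
  set τ : Matrix (Fin m × Fin n) (Fin m × Fin n) ℂ := uconj U b with hτ
  have hτPD : τ.PosDef := posDef_uconj hU1 b hbpos
  -- partial transpose of τ
  have hτeq : τ = (nb⁻¹ : ℂ) • (ρ + (ε:ℂ) • (1 : Matrix (Fin m × Fin n) (Fin m × Fin n) ℂ)) := by
    rw [hτ, hb, uconj_affine hU1, ← hρspec]
    push_cast
    rfl
  have hptτ : ptrans τ = uconj V (fun j => (mu j + ε) * nb⁻¹) := by
    rw [uconj_affine hV1, ← hΓspec, hτeq, ptrans_smul, ptrans_add,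
      ptrans_smul, ptrans_one]
    push_cast
    rfl
  have hnorm : traceNorm (ptrans τ) ≤ 1 := by
    rw [hptτ, traceNorm_uconj hV1 hV2]
    have step1 : ∀ j, |(mu j + ε) * nb⁻¹| ≤ (|mu j| + ε) * nb⁻¹ := by
      intro j
      rw [abs_mul, abs_of_pos (inv_pos.mpr hnb0)]
      refine mul_le_mul_of_nonneg_right ?_ (inv_pos.mpr hnb0).le
      calc |mu j + ε| ≤ |mu j| + |ε| := abs_add_le _ _
      _ = |mu j| + ε := by rw [abs_of_pos hεpos]
    calc ∑ j, |(mu j + ε) * nb⁻¹| ≤ ∑ j, (|mu j| + ε) * nb⁻¹ :=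
          Finset.sum_le_sum (fun j _ => step1 j)
    _ = (t + ε * N) * nb⁻¹ := by
          rw [← Finset.sum_mul]
          congr 1
          rw [Finset.sum_add_distrib, ← ht_eq]
          simp [hNdef, mul_comm]
    _ = 1 := by rw [← hnb, mul_inv_cancel₀ hnb0.ne']
  -- value of relEnt ρ τ
  have hlog_b : ∀ i, Real.log (b i) = Real.log (lam i + ε) - Real.log nb := by
    intro i
    rw [hb]
    rw [Real.log_mul (ne_of_gt (by have := hlam_pos i; linarith)) (ne_of_gt (by positivity)),
      Real.log_inv]
    ring
  have hrel : relEnt ρ τ = (∑ i, lam i * (Real.log (lam i) - Real.log (lam i + ε)))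
      + Real.log nb := by
    rw [relEnt]
    conv_lhs => rw [hρspec, hτ, mfun_uconj hU1 hU2, mfun_uconj hU1 hU2,
      uconj_sub, uconj_mul hU2, trace_uconj hU2]
    have : ∑ i, ((lam i * (Real.log (lam i) - Real.log (b i)) : ℝ) : ℂ)
        = (((∑ i, lam i * (Real.log (lam i) - Real.log (b i))) : ℝ) : ℂ) := by
      rw [Complex.ofReal_sum]
    rw [this, Complex.ofReal_re]
    calc ∑ i, lam i * (Real.log (lam i) - Real.log (b i))
        = ∑ i, (lam i * (Real.log (lam i) - Real.log (lam i + ε)) + lam i * Real.log nb) := by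
          refine Finset.sum_congr rfl (fun i _ => ?_)
          rw [hlog_b i]
          ring
    _ = (∑ i, lam i * (Real.log (lam i) - Real.log (lam i + ε)))
        + (∑ i, lam i) * Real.log nb := by
          rw [Finset.sum_add_distrib, Finset.sum_mul]
    _ = (∑ i, lam i * (Real.log (lam i) - Real.log (lam i + ε))) + Real.log nb := by
          rw [hlam_sum, one_mul]
  have hrel_lt : relEnt ρ τ < Real.log t := by
    rw [hrel]
    rw [hnb]
    exact hFε
  -- lower bound for the set
  set S : Set ℝ := {r : ℝ | ∃ τ : Matrix (Fin m × Fin n) (Fin m × Fin n) ℂ,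
      τ.PosDef ∧ traceNorm (ptrans τ) ≤ 1 ∧ r = relEnt ρ τ} with hS
  have hmem : relEnt ρ τ ∈ S := ⟨τ, hτPD, hnorm, rfl⟩
  have hbdd : BddBelow S := by
    refine ⟨∑ i, lam i * Real.log (lam i), ?_⟩
    rintro r ⟨σ, hσPD, hσnorm, rfl⟩
    have hσH : σ.IsHermitian := hσPD.1
    set W : Matrix (Fin m × Fin n) (Fin m × Fin n) ℂ := (hσH.eigenvectorUnitary : Matrix (Fin m × Fin n) (Fin m × Fin n) ℂ)
      with hW
    set kap : (Fin m × Fin n) → ℝ := hσH.eigenvalues with hkap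
    have hW1 : W * star W = 1 := evU_h1 hσH
    have hW2 : star W * W = 1 := evU_h2 hσH
    have hσspec : σ = uconj W kap := spectral_uconj hσH
    have hkap_pos : ∀ j, 0 < kap j := hσPD.eigenvalues_pos
    -- eigenvalues of σ sum to at most 1
    have hΓσH : (ptrans σ).IsHermitian := ptrans_isHermitian hσH
    set nu : (Fin m × Fin n) → ℝ := hΓσH.eigenvalues with hnu
    have hΓσspec : ptrans σ = uconj (hΓσH.eigenvectorUnitary : Matrix (Fin m × Fin n) (Fin m × Fin n) ℂ) nu :=
      spectral_uconj hΓσH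
    have hsum_eq : ∑ j, nu j = ∑ j, kap j := by
      have h1 := trace_uconj (evU_h2 hΓσH) nu
      have h2 := trace_uconj hW2 kap
      rw [← hΓσspec, ptrans_trace] at h1
      rw [← hσspec] at h2
      have : ((∑ j, nu j : ℝ) : ℂ) = ((∑ j, kap j : ℝ) : ℂ) := by
        rw [Complex.ofReal_sum, Complex.ofReal_sum]
        push_cast
        rw [← h1, ← h2]
      exact_mod_cast this
    have hkap_sum_le : ∑ j, kap j ≤ 1 := by
      have hnorm_eq : traceNorm (ptrans σ) = ∑ j, |nu j| := by
        rw [hΓσspec, traceNorm_uconj (evU_h1 hΓσH) (evU_h2 hΓσH)]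
      calc ∑ j, kap j = ∑ j, nu j := hsum_eq.symm
      _ ≤ ∑ j, |nu j| := Finset.sum_le_sum (fun j _ => le_abs_self _)
      _ = traceNorm (ptrans σ) := hnorm_eq.symm
      _ ≤ 1 := hσnorm
    have hkap_le_one : ∀ j, kap j ≤ 1 := by
      intro j
      calc kap j ≤ ∑ i, kap i :=
        Finset.single_le_sum (fun i _ => (hkap_pos i).le) (Finset.mem_univ j)
      _ ≤ 1 := hkap_sum_le
    -- expand relEnt
    have hexp : relEnt ρ σ = (∑ i, lam i * Real.log (lam i))
        - ((star W * ρ * W) * Matrix.diagonal (fun j => ((Real.log (kap j) : ℝ) : ℂ))).trace.re := by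
      rw [relEnt]
      conv_lhs => rw [hσspec, mfun_uconj hW1 hW2]
      conv_lhs => rw [hρspec, mfun_uconj hU1 hU2]
      rw [mul_sub, Matrix.trace_sub]
      have hfirst : (uconj U lam * uconj U (fun i => Real.log (lam i))).trace
          = ∑ i, ((lam i * Real.log (lam i) : ℝ) : ℂ) := by
        rw [uconj_mul hU2, trace_uconj hU2]
      have hsecond : (uconj U lam * uconj W (fun j => Real.log (kap j))).trace
          = ((star W * ρ * W) * Matrix.diagonal (fun j => ((Real.log (kap j) : ℝ) : ℂ))).trace := by
        rw [← hρspec]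
        unfold uconj
        rw [show ρ * (W * Matrix.diagonal (fun j => ((Real.log (kap j) : ℝ) : ℂ)) * star W)
            = (ρ * W * Matrix.diagonal (fun j => ((Real.log (kap j) : ℝ) : ℂ))) * star W by
          simp only [mul_assoc]]
        rw [Matrix.trace_mul_cycle]
        simp only [mul_assoc]
      rw [hfirst, hsecond, Complex.sub_re, Complex.re_sum]
      congr 1
      try push_cast
      try rfl
    rw [hexp]
    have hM : (star W * ρ * W).PosSemidef := by
      have := hρ.posSemidef.conjTranspose_mul_mul_same W
      rwa [← Matrix.star_eq_conjTranspose] at this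
    have htrace_le : 0 ≥ ((star W * ρ * W) * Matrix.diagonal
        (fun j => ((Real.log (kap j) : ℝ) : ℂ))).trace.re := by
      have hdiagval : ((star W * ρ * W) * Matrix.diagonal
          (fun j => ((Real.log (kap j) : ℝ) : ℂ))).trace
          = ∑ j, (star W * ρ * W) j j * ((Real.log (kap j) : ℝ) : ℂ) := by
        rw [Matrix.trace]
        congr 1
        funext j
        simp [Matrix.diag, Matrix.mul_apply, Matrix.diagonal]
      rw [hdiagval, Complex.re_sum]
      refine Finset.sum_nonpos (fun j _ => ?_)
      have hre : ((star W * ρ * W) j j * ((Real.log (kap j) : ℝ) : ℂ)).re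
          = ((star W * ρ * W) j j).re * Real.log (kap j) := by
        rw [Complex.mul_re]
        simp
      rw [hre]
      exact mul_nonpos_of_nonneg_of_nonpos (psd_diag_re_nonneg hM j)
        (Real.log_nonpos (hkap_pos j).le (hkap_le_one j))
    linarith
  calc sInf S ≤ relEnt ρ τ := csInf_le hbdd hmem
  _ < Real.log t := hrel_lt
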